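/- Let B ⊆ ℕ^m be a positive affine semigroup such that C(B) is generated by linearly independent elements e_1,…,e_d ∈ B, and let A be the submonoid of B generated by e_1,…,e_d. Let g be a coset of G(A) in G(B) with B ∩ g ≠ ∅, and for v ∈ B_A ∩ g write v = Σ_{k=1}^d λ_k^v e_k with λ_k^v ∈ ℚ. Then h := Σ_{k=1}^d (min{λ_k^v : v ∈ B_A ∩ g}) e_k lies in G(B), and v − h ∈ A for every v ∈ B_A ∩ g; consequently b − h ∈ A for every b ∈ B ∩ g. -/

import Mathlib

open scoped BigOperators

/-- The coordinatewise cast `ℕ^m → ℤ^m`. -/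
def ntz {m : ℕ} (x : Fin m → ℕ) : Fin m → ℤ := fun i => (x i : ℤ)

/-- The coordinatewise cast `ℕ^m → ℚ^m`. -/
def ntq {m : ℕ} (x : Fin m → ℕ) : Fin m → ℚ := fun i => (x i : ℚ)

/-- `G(S)`: the subgroup of `ℤ^m` generated by an affine semigroup `S ⊆ ℕ^m`. -/
def grp {m : ℕ} (S : AddSubmonoid (Fin m → ℕ)) : AddSubgroup (Fin m → ℤ) :=
  AddSubgroup.closure (ntz '' (S : Set (Fin m → ℕ)))

/-- `C(S)`: the cone in `ℚ^m` generated by `S`, i.e. all nonnegative rational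
linear combinations of elements of `S`. -/
def cone {m : ℕ} (S : AddSubmonoid (Fin m → ℕ)) : Set (Fin m → ℚ) :=
  {x | ∃ (n : ℕ) (c : Fin n → ℚ) (v : Fin n → Fin m → ℕ),
    (∀ i, 0 ≤ c i) ∧ (∀ i, v i ∈ S) ∧ x = ∑ i, c i • ntq (v i)}

/-- `B_A := {x ∈ B : x ∉ B + (A \ {0})}`. -/
def BA {m : ℕ} (A B : AddSubmonoid (Fin m → ℕ)) : Set (Fin m → ℕ) :=
  {x | x ∈ B ∧ ¬ ∃ b ∈ B, ∃ a ∈ A, a ≠ 0 ∧ x = b + a}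

lemma ntz_add {m : ℕ} (x y : Fin m → ℕ) : ntz (x + y) = ntz x + ntz y := by
  funext i; simp [ntz]

lemma memA_iff {m d : ℕ} (e : Fin d → Fin m → ℕ) (a : Fin m → ℕ) :
    a ∈ AddSubmonoid.closure (Set.range e) ↔ ∃ n : Fin d → ℕ, a = ∑ k, n k • e k := by
  constructor
  · intro h
    induction h using AddSubmonoid.closure_induction with
    | mem x hx =>
      obtain ⟨k, rfl⟩ := hx
      refine ⟨Pi.single k 1, ?_⟩
      simp [Pi.single_apply, ite_smul, Finset.sum_ite_eq']
    | zero => exact ⟨0, by simp⟩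
    | add x y _ _ ihx ihy =>
      obtain ⟨n, rfl⟩ := ihx
      obtain ⟨p, rfl⟩ := ihy
      exact ⟨n + p, by simp [add_smul, Finset.sum_add_distrib]⟩
  · rintro ⟨n, rfl⟩
    exact AddSubmonoid.sum_mem _ fun k _ =>
      AddSubmonoid.nsmul_mem _ (AddSubmonoid.subset_closure (Set.mem_range_self k)) _

lemma mem_grpA {m d : ℕ} (e : Fin d → Fin m → ℕ) {x : Fin m → ℤ}
    (hx : x ∈ grp (AddSubmonoid.closure (Set.range e))) :
    ∃ c : Fin d → ℤ, x = ∑ k, c k • ntz (e k) := by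
  have hx' : x ∈ (Submodule.span ℤ (Set.range fun k => ntz (e k))).toAddSubgroup := by
    refine (AddSubgroup.closure_le _).mpr ?_ hx
    rintro y ⟨a, ha, rfl⟩
    obtain ⟨n, rfl⟩ := (memA_iff e a).mp ha
    have hz : ntz (∑ k, n k • e k) = ∑ k, (n k : ℤ) • ntz (e k) := by
      funext i
      simp only [ntz, Finset.sum_apply, Pi.smul_apply, smul_eq_mul]
      push_cast
      ring
    rw [hz]
    exact Submodule.sum_mem _ fun k _ =>
      Submodule.smul_mem _ _ (Submodule.subset_span ⟨k, rfl⟩)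
  obtain ⟨c, hc⟩ := (Submodule.mem_span_range_iff_exists_fun ℤ).mp hx'
  exact ⟨c, hc.symm⟩

lemma ntq_sum_nsmul {m d : ℕ} (e : Fin d → Fin m → ℕ) (n : Fin d → ℕ) :
    ntq (∑ k, n k • e k) = ∑ k, (n k : ℚ) • ntq (e k) := by
  funext i
  simp only [ntq, Finset.sum_apply, Pi.smul_apply, smul_eq_mul]
  push_cast
  ring

lemma cast_z_sum {m d : ℕ} (e : Fin d → Fin m → ℕ) (c : Fin d → ℤ)
    {x : Fin m → ℤ} (hx : x = ∑ k, c k • ntz (e k)) :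
    (fun i => ((x i : ℤ) : ℚ)) = ∑ k, (c k : ℚ) • ntq (e k) := by
  subst hx
  funext i
  simp only [ntz, ntq, Finset.sum_apply, Pi.smul_apply, smul_eq_mul]
  push_cast
  ring

/-- Let `B ⊆ ℕ^m` be a positive affine semigroup such that `C(B)` is
generated by linearly independent `e₁,…,e_d ∈ B`, and let `A` be the submonoid of `B`
generated by the `e_k`.  Let `g` be a coset of `G(A)` in `G(B)` with `B ∩ g ≠ ∅`, and
for `v ∈ B_A ∩ g` write `v = Σ_k λ_k^v e_k` with `λ_k^v ∈ ℚ`.  Then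
`h := Σ_k (min{λ_k^v : v ∈ B_A ∩ g}) e_k` lies in `G(B)`, and `v − h ∈ A` for every
`v ∈ B_A ∩ g`; consequently `b − h ∈ A` for every `b ∈ B ∩ g`. -/
theorem stmt10 {m d : ℕ} (B : AddSubmonoid (Fin m → ℕ)) (hBfg : B.FG)
    (e : Fin d → Fin m → ℕ) (he : ∀ k, e k ∈ B)
    (hli : LinearIndependent ℚ (fun k => ntq (e k)))
    (A : AddSubmonoid (Fin m → ℕ)) (hA : A = AddSubmonoid.closure (Set.range e))
    (hcone : cone B = cone A)
    (g : (Fin m → ℤ) ⧸ grp A)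
    (hg : ∃ b ∈ B, (QuotientAddGroup.mk (ntz b) : (Fin m → ℤ) ⧸ grp A) = g)
    (lam : (Fin m → ℕ) → Fin d → ℚ)
    (hlam : ∀ v ∈ B, ntq v = ∑ k, lam v k • ntq (e k))
    (μ : Fin d → ℚ)
    (hmin : ∀ k, IsLeast {q : ℚ | ∃ v ∈ BA A B,
      (QuotientAddGroup.mk (ntz v) : (Fin m → ℤ) ⧸ grp A) = g ∧ q = lam v k} (μ k)) :
    ∃ h : Fin m → ℤ, h ∈ grp B ∧
      (fun i => (h i : ℚ)) = ∑ k, μ k • ntq (e k) ∧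
      (∀ v ∈ BA A B, (QuotientAddGroup.mk (ntz v) : (Fin m → ℤ) ⧸ grp A) = g →
        ∃ a ∈ A, ntz v - h = ntz a) ∧
      (∀ b ∈ B, (QuotientAddGroup.mk (ntz b) : (Fin m → ℤ) ⧸ grp A) = g →
        ∃ a ∈ A, ntz b - h = ntz a) := by
  -- uniqueness of coordinates
  have uniq : ∀ f f' : Fin d → ℚ, ∑ k, f k • ntq (e k) = ∑ k, f' k • ntq (e k) →
      ∀ k, f k = f' k := by
    intro f f' hff k
    have h0 : ∑ k, (f - f') k • ntq (e k) = 0 := by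
      simp only [Pi.sub_apply, sub_smul, Finset.sum_sub_distrib, hff, sub_self]
    have := Fintype.linearIndependent_iff.mp hli (f - f') h0 k
    simpa [sub_eq_zero] using this
  -- integrality of coordinate differences within a coset
  have coordint : ∀ v ∈ B, ∀ w ∈ B,
      (QuotientAddGroup.mk (ntz v) : (Fin m → ℤ) ⧸ grp A) = QuotientAddGroup.mk (ntz w) →
      ∃ c : Fin d → ℤ, ∀ k, lam v k - lam w k = -(c k) := by
    intro v hv w hw hvw
    have hmem : -(ntz v) + ntz w ∈ grp A := QuotientAddGroup.eq.mp hvw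
    rw [hA] at hmem
    obtain ⟨c, hc⟩ := mem_grpA e hmem
    refine ⟨c, fun k => ?_⟩
    have hcast := cast_z_sum e c hc
    have hsub : (fun i => (((-(ntz v) + ntz w) i : ℤ) : ℚ)) =
        ∑ k, (lam w k - lam v k) • ntq (e k) := by
      funext i
      have h1 := congrFun (hlam v hv) i
      have h2 := congrFun (hlam w hw) i
      simp only [ntq, Finset.sum_apply, Pi.smul_apply, smul_eq_mul] at h1 h2
      simp only [ntz, Pi.add_apply, Pi.neg_apply, Finset.sum_apply, Pi.smul_apply,
        smul_eq_mul, sub_mul, Finset.sum_sub_distrib, ntq]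
      push_cast
      rw [← h1, ← h2]
      ring
    have := uniq _ _ (hsub.symm.trans hcast) k
    linarith [this]
  -- A ≤ B
  have hAB : ∀ a ∈ A, a ∈ B := by
    intro a ha
    rw [hA] at ha
    obtain ⟨n, rfl⟩ := (memA_iff e a).mp ha
    exact AddSubmonoid.sum_mem _ fun k _ => AddSubmonoid.nsmul_mem _ (he k) _
  -- ntz of A-elements is in grp A
  have hntzA : ∀ a ∈ A, ntz a ∈ grp A := fun a ha =>
    AddSubgroup.subset_closure ⟨a, ha, rfl⟩
  -- decomposition b = x + a with x ∈ BA
  have decomp : ∀ N : ℕ, ∀ b ∈ B, (∑ i, b i) < N → ∃ x ∈ BA A B, ∃ a ∈ A, b = x + a := by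
    intro N
    induction N with
    | zero => exact fun b _ h => absurd h (Nat.not_lt_zero _)
    | succ N ih =>
      intro b hb hlt
      by_cases hmem : b ∈ BA A B
      · exact ⟨b, hmem, 0, A.zero_mem, (add_zero b).symm⟩
      · have hP : ∃ b' ∈ B, ∃ a ∈ A, a ≠ 0 ∧ b = b' + a := by
          by_contra hP
          exact hmem ⟨hb, hP⟩
        obtain ⟨b', hb', a, ha, hane, rfl⟩ := hP
        have hapos : 0 < ∑ i, a i := by
          rcases Nat.eq_zero_or_pos (∑ i, a i) with h0 | h0
          · exfalso
            apply hane
            funext i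
            exact Finset.sum_eq_zero_iff.mp h0 i (Finset.mem_univ i)
          · exact h0
        have hsum : ∑ i, (b' + a) i = (∑ i, b' i) + ∑ i, a i := by
          simp [Finset.sum_add_distrib]
        have hlt' : (∑ i, b' i) < N := by omega
        obtain ⟨x, hx, a', ha', rfl⟩ := ih b' hb' hlt'
        exact ⟨x, hx, a' + a, A.add_mem ha' ha, add_assoc _ _ _⟩
  have decomp' : ∀ b ∈ B, ∃ x ∈ BA A B, ∃ a ∈ A, b = x + a := fun b hb =>
    decomp ((∑ i, b i) + 1) b hb (Nat.lt_succ_self _)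
  -- base point v₀ ∈ BA ∩ g
  obtain ⟨b₀, hb₀, hb₀g⟩ := hg
  obtain ⟨v₀, hv₀BA, a₀', ha₀', hb₀eq⟩ := decomp' b₀ hb₀
  have hv₀B : v₀ ∈ B := hv₀BA.1
  have hv₀g : (QuotientAddGroup.mk (ntz v₀) : (Fin m → ℤ) ⧸ grp A) = g := by
    rw [← hb₀g]
    refine (QuotientAddGroup.eq).mpr ?_
    have : -(ntz v₀) + ntz b₀ = ntz a₀' := by
      rw [hb₀eq, ntz_add]; abel
    rw [this]
    exact hntzA a₀' ha₀'
  -- minimizers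
  have hminmem : ∀ k, ∃ v ∈ BA A B,
      (QuotientAddGroup.mk (ntz v) : (Fin m → ℤ) ⧸ grp A) = g ∧ μ k = lam v k :=
    fun k => (hmin k).1
  choose vmin hvminBA hvming hvmineq using hminmem
  have hμle : ∀ v ∈ BA A B,
      (QuotientAddGroup.mk (ntz v) : (Fin m → ℤ) ⧸ grp A) = g → ∀ k, μ k ≤ lam v k :=
    fun v hv hvg k => (hmin k).2 ⟨v, hv, hvg, rfl⟩
  -- for v in BA ∩ g, lam v k - μ k is a nonneg integer
  have key : ∀ v ∈ BA A B,
      (QuotientAddGroup.mk (ntz v) : (Fin m → ℤ) ⧸ grp A) = g →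
      ∃ n : Fin d → ℕ, ∀ k, (n k : ℚ) = lam v k - μ k := by
    intro v hvBA hvg
    have hvB : v ∈ B := hvBA.1
    have hint : ∀ k, ∃ z : ℤ, (z : ℚ) = lam v k - μ k := by
      intro k
      obtain ⟨c, hc⟩ := coordint v hvB (vmin k) (hvminBA k).1 (hvg.trans (hvming k).symm)
      refine ⟨-(c k), ?_⟩
      rw [hvmineq k]
      push_cast
      linarith [hc k]
    choose z hz using hint
    refine ⟨fun k => (z k).toNat, fun k => ?_⟩
    have hnn : 0 ≤ z k := by
      have h1 : μ k ≤ lam v k := hμle v hvBA hvg k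
      have : (0 : ℚ) ≤ (z k : ℚ) := by rw [hz k]; linarith
      exact_mod_cast this
    rw [← hz k]
    exact_mod_cast Int.toNat_of_nonneg hnn
  obtain ⟨n₀, hn₀⟩ := key v₀ hv₀BA hv₀g
  set a₀ : Fin m → ℕ := ∑ k, n₀ k • e k with ha₀def
  have ha₀A : a₀ ∈ A := by
    rw [hA]; exact (memA_iff e a₀).mpr ⟨n₀, rfl⟩
  refine ⟨ntz v₀ - ntz a₀, ?_, ?_, ?_, ?_⟩
  · exact sub_mem (AddSubgroup.subset_closure ⟨v₀, hv₀B, rfl⟩)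
      (AddSubgroup.subset_closure ⟨a₀, hAB a₀ ha₀A, rfl⟩)
  · have hcast : (fun i => (((ntz v₀ - ntz a₀) i : ℤ) : ℚ)) = ntq v₀ - ntq a₀ := by
      funext i
      simp only [ntz, ntq, Pi.sub_apply]
      push_cast
      ring
    rw [hcast, hlam v₀ hv₀B, ha₀def, ntq_sum_nsmul, ← Finset.sum_sub_distrib]
    refine Finset.sum_congr rfl fun k _ => ?_
    rw [← sub_smul, hn₀ k, sub_sub_cancel]
  · intro v hvBA hvg
    obtain ⟨p, hp⟩ := key v hvBA hvg
    refine ⟨∑ k, p k • e k, by rw [hA]; exact (memA_iff e _).mpr ⟨p, rfl⟩, ?_⟩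
    have hq : ntq v - ntq v₀ + ntq a₀ = ntq (∑ k, p k • e k) := by
      rw [hlam v hvBA.1, hlam v₀ hv₀B, ha₀def, ntq_sum_nsmul, ntq_sum_nsmul,
        ← Finset.sum_sub_distrib, ← Finset.sum_add_distrib]
      refine Finset.sum_congr rfl fun k _ => ?_
      rw [← sub_smul, ← add_smul, hn₀ k, hp k]
      congr 1
      ring
    funext i
    have hqi := congrFun hq i
    simp only [ntq, Pi.sub_apply, Pi.add_apply] at hqi
    have hzq : (v i : ℤ) - (v₀ i : ℤ) + (a₀ i : ℤ) = ((∑ k, p k • e k) i : ℤ) := by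
      exact_mod_cast hqi
    simp only [ntz, Pi.sub_apply]
    omega
  · intro b hb hbg
    obtain ⟨x, hxBA, a', ha', hbeq⟩ := decomp' b hb
    have hxg : (QuotientAddGroup.mk (ntz x) : (Fin m → ℤ) ⧸ grp A) = g := by
      rw [← hbg]
      refine (QuotientAddGroup.eq).mpr ?_
      have : -(ntz x) + ntz b = ntz a' := by rw [hbeq, ntz_add]; abel
      rw [this]
      exact hntzA a' ha'
    obtain ⟨p, hp⟩ := key x hxBA hxg
    refine ⟨(∑ k, p k • e k) + a', A.add_mem (by rw [hA]; exact (memA_iff e _).mpr ⟨p, rfl⟩) ha', ?_⟩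
    have hq : ntq x - ntq v₀ + ntq a₀ = ntq (∑ k, p k • e k) := by
      rw [hlam x hxBA.1, hlam v₀ hv₀B, ha₀def, ntq_sum_nsmul, ntq_sum_nsmul,
        ← Finset.sum_sub_distrib, ← Finset.sum_add_distrib]
      refine Finset.sum_congr rfl fun k _ => ?_
      rw [← sub_smul, ← add_smul, hn₀ k, hp k]
      congr 1
      ring
    funext i
    have hqi := congrFun hq i
    simp only [ntq, Pi.sub_apply, Pi.add_apply] at hqi
    have hzq : (x i : ℤ) - (v₀ i : ℤ) + (a₀ i : ℤ) = ((∑ k, p k • e k) i : ℤ) := by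
      exact_mod_cast hqi
    have hbi : b i = x i + a' i := by rw [hbeq]; rfl
    simp only [ntz, Pi.sub_apply, Pi.add_apply]
    omega
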